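/- If F is a meager filter on ℕ, then player ONE has a winning strategy in the game G1(F). -/

import Mathlib

open Filter Set

/-- A strategy: maps finite sequences of the opponent's moves to a natural number. -/
abbrev Strat := List ℕ → ℕ

/-- TWO's move in inning `k` (0-indexed) when following strategy `σ` against ONE's
moves `m`: TWO has seen `m 0, …, m k`. -/
def twoFollow (σ : Strat) (m : ℕ → ℕ) (k : ℕ) : ℕ :=
  σ (List.ofFn fun i : Fin (k + 1) => m i)

/-- ONE's move in inning `k` when following strategy `σ` against TWO's moves `n`:
ONE's move depends on `n 0, …, n (k-1)` (the first move is `σ []`). -/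
def oneFollow (σ : Strat) (n : ℕ → ℕ) (k : ℕ) : ℕ :=
  σ (List.ofFn fun i : Fin k => n i)

/-- TWO wins the play `(m 0, n 0, m 1, n 1, …)` of the game `G1(F)`. -/
def TwoWins1 (F : Set (Set ℕ)) (m n : ℕ → ℕ) : Prop :=
  StrictMono n ∧ (∀ N : ℕ, ∃ k, N ≤ k ∧ m k < n k) ∧ Set.range n ∈ F

/-- TWO wins the play `(m 0, n 0, m 1, n 1, …)` of the game `G2(F)`. -/
def TwoWins2 (F : Set (Set ℕ)) (m n : ℕ → ℕ) : Prop :=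
  (∀ᶠ k in Filter.atTop, m k < n k) ∧ Set.range n ∈ F

/-- `σ` is a winning strategy for TWO in `G1(F)`. -/
def TwoWinning1 (F : Set (Set ℕ)) (σ : Strat) : Prop :=
  ∀ m : ℕ → ℕ, TwoWins1 F m (twoFollow σ m)

/-- `σ` is a winning strategy for ONE in `G1(F)`. -/
def OneWinning1 (F : Set (Set ℕ)) (σ : Strat) : Prop :=
  ∀ n : ℕ → ℕ, ¬ TwoWins1 F (oneFollow σ n) n

/-- `σ` is a winning strategy for TWO in `G2(F)`. -/
def TwoWinning2 (F : Set (Set ℕ)) (σ : Strat) : Prop :=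
  ∀ m : ℕ → ℕ, TwoWins2 F m (twoFollow σ m)

/-- `σ` is a winning strategy for ONE in `G2(F)`. -/
def OneWinning2 (F : Set (Set ℕ)) (σ : Strat) : Prop :=
  ∀ n : ℕ → ℕ, ¬ TwoWins2 F (oneFollow σ n) n

/-- `F` is a non-principal filter on `ℕ`: upward closed, closed under finite
intersections, and every member is infinite. -/
def IsNPFilter (F : Set (Set ℕ)) : Prop :=
  (∀ X ∈ F, ∀ Y : Set ℕ, X ⊆ Y → Y ∈ F) ∧
  (∀ X ∈ F, ∀ Y ∈ F, X ∩ Y ∈ F) ∧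
  (∀ X ∈ F, X.Infinite)

/-- `F` is a rare filter: every partition of `ℕ` into disjoint (nonempty) finite sets
admits a selector in `F`. -/
def IsRare (F : Set (Set ℕ)) : Prop :=
  ∀ I : ℕ → Set ℕ, (∀ n, (I n).Finite) → (∀ n, (I n).Nonempty) →
    (Pairwise fun i j => Disjoint (I i) (I j)) → (⋃ n, I n) = Set.univ →
    ∃ X ∈ F, ∀ n, (X ∩ I n).Subsingleton

/-- The subset of Cantor space `2^ℕ` corresponding to the filter `F`. -/
def cantorCoded (F : Set (Set ℕ)) : Set (ℕ → Bool) :=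
  {χ | {n | χ n = true} ∈ F}

/-- The increasing enumeration of `X ⊆ ℕ`. -/
noncomputable def enum (X : Set ℕ) : ℕ → ℕ := Nat.nth (· ∈ X)

/-- `g` eventually dominates `f`. -/
def EvDom (g f : ℕ → ℕ) : Prop := ∀ᶠ k in Filter.atTop, f k < g k


section Aux

/-- A basic open set (cylinder) around `χ` sits inside any open set containing `χ`. -/
lemma exists_cyl_subset {U : Set (ℕ → Bool)} (hU : IsOpen U) {χ : ℕ → Bool} (hχ : χ ∈ U) :
    ∃ n, ∀ ψ : ℕ → Bool, (∀ i < n, ψ i = χ i) → ψ ∈ U := by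
  rw [isOpen_pi_iff] at hU
  obtain ⟨I, u, hu, hsub⟩ := hU χ hχ
  refine ⟨(I.sup id) + 1, fun ψ hψ => hsub ?_⟩
  intro i hi
  rw [hψ i (Nat.lt_succ_of_le (Finset.le_sup (f := id) hi))]
  exact (hu i hi).2

lemma cyl_isOpen (χ : ℕ → Bool) (n : ℕ) :
    IsOpen {ψ : ℕ → Bool | ∀ i < n, ψ i = χ i} := by
  have : {ψ : ℕ → Bool | ∀ i < n, ψ i = χ i}
      = ⋂ i ∈ Finset.range n, (fun ψ : ℕ → Bool => ψ i) ⁻¹' {χ i} := by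
    ext ψ; simp
  rw [this]
  exact isOpen_biInter_finset fun i _ =>
    (continuous_apply i).isOpen_preimage _ (isOpen_discrete _)

/-- One-string extension step into the complement of a closed nowhere dense set. -/
lemma step_one {M : Set (ℕ → Bool)} (hM : IsClosed M) (hnwd : interior M = ∅)
    (χ : ℕ → Bool) (n : ℕ) :
    ∃ N, n ≤ N ∧ ∃ χ' : ℕ → Bool, (∀ i < n, χ' i = χ i) ∧
      ∀ ψ : ℕ → Bool, (∀ i < N, ψ i = χ' i) → ψ ∉ M := by
  have hdense : Dense Mᶜ := interior_eq_empty_iff_dense_compl.mp hnwd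
  obtain ⟨φ, hφU, hφM⟩ := hdense.inter_open_nonempty _ (cyl_isOpen χ n) ⟨χ, fun i _ => rfl⟩
  obtain ⟨m, hm⟩ := exists_cyl_subset hM.isOpen_compl hφM
  refine ⟨max n m, le_max_left _ _, φ, hφU, fun ψ hψ => ?_⟩
  exact hm ψ (fun i hi => hψ i (lt_of_lt_of_le hi (le_max_right _ _)))

/-- All-strings extension step: a single tail pattern on `[n, N)` escaping `M`
regardless of the initial segment. -/
lemma step_all {M : Set (ℕ → Bool)} (hM : IsClosed M) (hnwd : interior M = ∅) (n : ℕ) :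
    ∃ N, n ≤ N ∧ ∃ t : ℕ → Bool, ∀ χ : ℕ → Bool,
      (∀ i, n ≤ i → i < N → χ i = t i) → χ ∉ M := by
  have key : ∀ S : Finset (Fin n → Bool), ∃ N, n ≤ N ∧ ∃ t : ℕ → Bool,
      ∀ v ∈ S, ∀ χ : ℕ → Bool, (∀ i : Fin n, χ i = v i) →
        (∀ i, n ≤ i → i < N → χ i = t i) → χ ∉ M := by
    intro S
    induction S using Finset.induction with
    | empty => exact ⟨n, le_rfl, fun _ => false, by simp⟩
    | @insert a S ha IH =>
      obtain ⟨N, hnN, t, ht⟩ := IH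
      obtain ⟨N', hNN', χ', hχ'1, hχ'2⟩ := step_one hM hnwd
        (fun i => if h : i < n then a ⟨i, h⟩ else t i) N
      refine ⟨N', le_trans hnN hNN', fun i => if i < N then t i else χ' i, ?_⟩
      intro v hv χ hχv hχt
      rcases Finset.mem_insert.mp hv with rfl | hv
      · apply hχ'2
        intro i hi
        by_cases h1 : i < n
        · rw [hχv ⟨i, h1⟩]
          have := hχ'1 i (lt_of_lt_of_le h1 hnN)
          simp only [h1, dif_pos] at this
          exact this.symm
        · push_neg at h1
          by_cases h2 : i < N
          · have h3 := hχt i h1 (lt_of_lt_of_le h2 hNN')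
            simp only [h2, if_pos] at h3
            rw [h3]
            have := hχ'1 i h2
            simp only [not_lt.mpr h1, dif_neg, not_false_iff] at this
            exact this.symm
          · have h3 := hχt i h1 hi
            simpa only [h2, if_neg, not_false_iff] using h3
      · refine ht v hv χ hχv (fun i h1 h2 => ?_)
        have h3 := hχt i h1 (lt_of_lt_of_le h2 hNN')
        simpa only [h2, if_pos] using h3
  obtain ⟨N, hnN, t, ht⟩ := key Finset.univ
  exact ⟨N, hnN, t, fun χ h =>
    ht (fun i => χ i) (Finset.mem_univ _) χ (fun i => rfl) h⟩

lemma list_le_foldr_max (l : List ℕ) : ∀ x ∈ l, x ≤ l.foldr max 0 := by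
  induction l with
  | nil => simp
  | cons a l IH =>
    intro x hx
    rcases List.mem_cons.mp hx with rfl | hx
    · exact le_max_left _ _
    · exact le_trans (IH x hx) (le_max_right _ _)

/-- Talagrand-style characterization (the direction we need): from meagerness of the
coded filter, there is an increasing interval structure met by almost every index by
every member of `F`. -/
lemma nwd_union {α : Type*} [TopologicalSpace α] {A B : Set α}
    (hA : IsClosed A) (ha : interior A = ∅) (hb : interior B = ∅) :
    interior (A ∪ B) = ∅ := by
  rw [interior_eq_empty_iff_dense_compl] at ha hb ⊢
  rw [Set.compl_union]
  exact ha.inter_of_isOpen_left hb hA.isOpen_compl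

/-- Talagrand-style characterization (the direction we need): from meagerness of the
coded filter, there is an increasing interval structure met, from some point on,
by every member of `F`. -/
lemma exists_intervals (F : Set (Set ℕ)) (hF : IsNPFilter F)
    (hmeager : IsMeagre (cantorCoded F)) :
    ∃ e : ℕ → ℕ, StrictMono e ∧
      ∀ X ∈ F, ∃ N, ∀ k, N ≤ k → (X ∩ Set.Ico (e k) (e (k + 1))).Nonempty := by
  classical
  obtain ⟨S, hSnwd, hScnt, hScov⟩ := isMeagre_iff_countable_union_isNowhereDense.mp hmeager
  obtain ⟨f, hf⟩ := (hScnt.insert (∅ : Set (ℕ → Bool))).exists_eq_range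
    (insert_nonempty _ _)
  have hfnwd : ∀ i, IsNowhereDense (f i) := by
    intro i
    have : f i ∈ insert (∅ : Set (ℕ → Bool)) S := hf ▸ mem_range_self i
    rcases this with h | h
    · rw [h]; exact isNowhereDense_empty
    · exact hSnwd _ h
  -- increasing sequence of closed nowhere dense supersets
  set M : ℕ → Set (ℕ → Bool) :=
    fun k => Nat.rec (closure (f 0)) (fun k Mk => Mk ∪ closure (f (k + 1))) k with hM
  have hMclosed : ∀ k, IsClosed (M k) := by
    intro k
    induction k with
    | zero => exact isClosed_closure
    | succ k IH => exact IH.union isClosed_closure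
  have hMnwd : ∀ k, interior (M k) = ∅ := by
    intro k
    induction k with
    | zero => exact hfnwd 0
    | succ k IH => exact nwd_union (hMclosed k) IH (hfnwd (k + 1))
  have hMmono : ∀ i k, i ≤ k → f i ⊆ M k := by
    intro i k
    induction k with
    | zero =>
      intro hik
      obtain rfl : i = 0 := Nat.le_zero.mp hik
      exact subset_closure
    | succ k IH =>
      intro hik
      rcases Nat.lt_or_ge i (k + 1) with h | h
      · exact (IH (Nat.lt_succ_iff.mp h)).trans Set.subset_union_left
      · obtain rfl : i = k + 1 := le_antisymm hik h
        exact subset_closure.trans Set.subset_union_right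
  -- recursive construction of endpoints
  choose N hN t ht using fun k m => step_all (hMclosed k) (hMnwd k) m
  set e : ℕ → ℕ := fun k => Nat.rec 0 (fun k ek => max (N k ek) (ek + 1)) k with he
  have hemono : StrictMono e := by
    apply strictMono_nat_of_lt_succ
    intro k
    exact lt_of_lt_of_le (Nat.lt_succ_self _) (le_max_right _ _)
  have heN : ∀ k, N k (e k) ≤ e (k + 1) := fun k => le_max_left _ _
  refine ⟨e, hemono, ?_⟩
  intro X hX
  by_contra hcon
  push_neg at hcon
  have hmiss : ∀ N₀ : ℕ, ∃ k, N₀ ≤ k ∧ X ∩ Set.Ico (e k) (e (k + 1)) = ∅ := by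
    intro N₀
    obtain ⟨k, hk1, hk2⟩ := hcon N₀
    exact ⟨k, hk1, hk2⟩
  -- build the bad characteristic function
  obtain ⟨χ, hχ⟩ : ∃ χ : ℕ → Bool, ∀ i, χ i = false ↔
      (∃ k, e k ≤ i ∧ i < e (k + 1) ∧ X ∩ Set.Ico (e k) (e (k + 1)) = ∅ ∧
        t k (e k) i = false) := by
    refine ⟨fun i => if (∃ k, e k ≤ i ∧ i < e (k + 1) ∧
        X ∩ Set.Ico (e k) (e (k + 1)) = ∅ ∧ t k (e k) i = false) then false else true,
      fun i => ?_⟩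
    by_cases h : (∃ k, e k ≤ i ∧ i < e (k + 1) ∧
        X ∩ Set.Ico (e k) (e (k + 1)) = ∅ ∧ t k (e k) i = false)
    · simp [h]
    · simp [h]
  have hXsub : X ⊆ {n | χ n = true} := by
    intro i hi
    rcases Bool.eq_false_or_eq_true (χ i) with hb | hb
    · exact hb
    · exfalso
      obtain ⟨k, h1, h2, h3, _⟩ := (hχ i).mp hb
      exact absurd h3 (Set.Nonempty.ne_empty ⟨i, hi, h1, h2⟩)
  have hχF : χ ∈ cantorCoded F := hF.1 X hX _ hXsub
  obtain ⟨s, hsS, hχs⟩ := hScov hχF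
  have hsr : s ∈ Set.range f := by
    rw [← hf]; exact Set.mem_insert_of_mem _ hsS
  obtain ⟨i₀, rfl⟩ := hsr
  obtain ⟨k, hk1, hk2⟩ := hmiss i₀
  have huniq : ∀ k' j, e k ≤ j → j < e (k + 1) → e k' ≤ j → j < e (k' + 1) → k' = k := by
    intro k' j h1 h2 h3 h4
    by_contra hne
    rcases Nat.lt_or_ge k' k with h | h
    · have : e (k' + 1) ≤ e k := hemono.monotone h
      omega
    · have h' : k < k' := lt_of_le_of_ne h (Ne.symm hne)
      have : e (k + 1) ≤ e k' := hemono.monotone h'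
      omega
  have hχnotM : χ ∉ M k := by
    apply ht k (e k)
    intro j hj1 hj2
    have hj2' : j < e (k + 1) := lt_of_lt_of_le hj2 (heN k)
    cases htk : t k (e k) j with
    | false => exact (hχ j).mpr ⟨k, hj1, hj2', hk2, htk⟩
    | true =>
      rcases Bool.eq_false_or_eq_true (χ j) with hb | hb
      · exact hb
      · exfalso
        obtain ⟨k', h1, h2, _, h4⟩ := (hχ j).mp hb
        rw [huniq k' j hj1 hj2' h1 h2] at h4
        simp [htk] at h4
  exact hχnotM (hMmono i₀ k hk1 hχs)

end Aux

/-- If `F` is meager then ONE has a winning strategy in `G1(F)`. -/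
theorem stmt1 (F : Set (Set ℕ)) (hF : IsNPFilter F) (hmeager : IsMeagre (cantorCoded F)) :
    ∃ σ : Strat, OneWinning1 F σ := by
  obtain ⟨e, hemono, hmeet⟩ := exists_intervals F hF hmeager
  refine ⟨fun l => e (l.foldr max 0 + 2), ?_⟩
  rintro n ⟨hmono, hinf, hrange⟩
  obtain ⟨N, hN⟩ := hmeet _ hrange
  obtain ⟨j, hjN, hjlt⟩ := hinf (N + 1)
  set l : List ℕ := List.ofFn fun i : Fin j => n i with hl
  set Mx : ℕ := l.foldr max 0 with hMx
  have hone : oneFollow (fun l => e (l.foldr max 0 + 2)) n j = e (Mx + 1 + 1) := rfl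
  have hj1 : 1 ≤ j := le_trans (Nat.le_add_left 1 N) hjN
  have hmem : n (j - 1) ∈ l := by
    rw [hl, List.mem_ofFn]
    exact ⟨⟨j - 1, by omega⟩, rfl⟩
  have hMxge : N ≤ Mx := by
    have h1 : n (j - 1) ≤ Mx := list_le_foldr_max l _ hmem
    have h2 : j - 1 ≤ n (j - 1) := hmono.le_apply
    omega
  obtain ⟨x, hx1, hx2, hx3⟩ := hN (Mx + 1) (by omega)
  obtain ⟨p, rfl⟩ := hx1
  rcases Nat.lt_or_ge p j with hp | hp
  · have h1 : n p ≤ Mx := list_le_foldr_max l _ (by rw [hl, List.mem_ofFn]; exact ⟨⟨p, hp⟩, rfl⟩)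
    have h2 : Mx + 1 ≤ e (Mx + 1) := hemono.le_apply
    omega
  · have h1 : n j ≤ n p := hmono.monotone hp
    omega
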